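/- With the modification construction as above, for any x₀ ∈ V_o and r > 0, μ_o(B_{d_{σ_o}}(x₀, r)) ≤ μ(B_{d_σ}(x₀, r)) ≤ 3·μ_o(B_{d_{σ_o}}(x₀, r)), where balls are closed balls in the respective adapted path metrics. -/

import Mathlib

/-- The sum of `σ`-weights along consecutive pairs of a list of vertices. -/
def chainSum {V : Type*} (σ : V → V → ℝ) : List V → ℝ
  | a :: b :: l => σ a b + chainSum σ (b :: l)
  | _ => 0

/-- `l` is a path from `x` to `y` in the graph whose edges are the pairs of
positive weight. -/
def isPath {V : Type*} (w : V → V → ℝ) (x y : V) (l : List V) : Prop :=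
  l.head? = some x ∧ l.getLast? = some y ∧ l.Chain' (fun a b => 0 < w a b)

/-- The adapted path (pseudo-)metric: the infimum of `σ`-lengths of paths from
`x` to `y`. -/
noncomputable def dPath {V : Type*} (w σ : V → V → ℝ) (x y : V) : ℝ :=
  sInf {s : ℝ | ∃ l : List V, isPath w x y l ∧ s = chainSum σ l}

open Classical in
/-- The new vertices of the modification: `(a, b, i)` with `(a,b)` an oriented
edge (i.e. `(a,b) ∈ Ep` and `w_o a b > 0`) and `1 ≤ i ≤ 𝔫(a,b) - 1`. -/
def NewV {Vo : Type*} (wo : Vo → Vo → ℝ) (n : Vo → Vo → ℕ) (Ep : Set (Vo × Vo)) : Type _ :=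
  {p : Vo × Vo × ℕ //
    (p.1, p.2.1) ∈ Ep ∧ 0 < wo p.1 p.2.1 ∧ 1 ≤ p.2.2 ∧ p.2.2 ≤ n p.1 p.2.1 - 1}

/-- The vertex set of the modified graph: old vertices together with the new
subdivision vertices. -/
abbrev MV {Vo : Type*} (wo : Vo → Vo → ℝ) (n : Vo → Vo → ℕ) (Ep : Set (Vo × Vo)) : Type _ :=
  Vo ⊕ NewV wo n Ep

open Classical in
/-- The edge weights of the modified graph: each oriented edge `e = (a,b)` is
subdivided into the path `a = x₀ᵉ ~ x₁ᵉ ~ ⋯ ~ x_{𝔫(e)}ᵉ = b`, and all the new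
edges along `e` carry the weight `𝔫(e)·w_o(e)`. -/
noncomputable def mw {Vo : Type*} (wo : Vo → Vo → ℝ) (n : Vo → Vo → ℕ) (Ep : Set (Vo × Vo)) :
    MV wo n Ep → MV wo n Ep → ℝ
  | Sum.inl _, Sum.inl _ => 0
  | Sum.inl x, Sum.inr p =>
      if (x = p.val.1 ∧ p.val.2.2 = 1) ∨
          (x = p.val.2.1 ∧ p.val.2.2 = n p.val.1 p.val.2.1 - 1)
      then (n p.val.1 p.val.2.1 : ℝ) * wo p.val.1 p.val.2.1 else 0
  | Sum.inr p, Sum.inl x =>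
      if (x = p.val.1 ∧ p.val.2.2 = 1) ∨
          (x = p.val.2.1 ∧ p.val.2.2 = n p.val.1 p.val.2.1 - 1)
      then (n p.val.1 p.val.2.1 : ℝ) * wo p.val.1 p.val.2.1 else 0
  | Sum.inr p, Sum.inr q =>
      if p.val.1 = q.val.1 ∧ p.val.2.1 = q.val.2.1 ∧
          (p.val.2.2 = q.val.2.2 + 1 ∨ q.val.2.2 = p.val.2.2 + 1)
      then (n p.val.1 p.val.2.1 : ℝ) * wo p.val.1 p.val.2.1 else 0

open Classical in
/-- The adapted weight of the modified graph: each new edge along the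
subdivision of `e` has weight `σ_o(e)/𝔫(e)`. -/
noncomputable def mσ {Vo : Type*} (wo σo : Vo → Vo → ℝ) (n : Vo → Vo → ℕ)
    (Ep : Set (Vo × Vo)) : MV wo n Ep → MV wo n Ep → ℝ
  | Sum.inl _, Sum.inl _ => 0
  | Sum.inl x, Sum.inr p =>
      if (x = p.val.1 ∧ p.val.2.2 = 1) ∨
          (x = p.val.2.1 ∧ p.val.2.2 = n p.val.1 p.val.2.1 - 1)
      then σo p.val.1 p.val.2.1 / (n p.val.1 p.val.2.1 : ℝ) else 0
  | Sum.inr p, Sum.inl x =>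
      if (x = p.val.1 ∧ p.val.2.2 = 1) ∨
          (x = p.val.2.1 ∧ p.val.2.2 = n p.val.1 p.val.2.1 - 1)
      then σo p.val.1 p.val.2.1 / (n p.val.1 p.val.2.1 : ℝ) else 0
  | Sum.inr p, Sum.inr q =>
      if p.val.1 = q.val.1 ∧ p.val.2.1 = q.val.2.1 ∧
          (p.val.2.2 = q.val.2.2 + 1 ∨ q.val.2.2 = p.val.2.2 + 1)
      then σo p.val.1 p.val.2.1 / (n p.val.1 p.val.2.1 : ℝ) else 0

/-- The vertex measure of the modified graph: old vertices keep their measure,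
and each new vertex on the subdivision of `e` has measure `2·w_o(e)·σ_o(e)²/𝔫(e)`. -/
noncomputable def mμ {Vo : Type*} (wo σo : Vo → Vo → ℝ) (μo : Vo → ℝ)
    (n : Vo → Vo → ℕ) (Ep : Set (Vo × Vo)) : MV wo n Ep → ℝ
  | Sum.inl x => μo x
  | Sum.inr p => 2 * wo p.val.1 p.val.2.1 * σo p.val.1 p.val.2.1 ^ 2 / (n p.val.1 p.val.2.1 : ℝ)

section Basic

variable {V : Type*}

lemma chainSum_cons (σ : V → V → ℝ) (a b : V) (l : List V) :
    chainSum σ (a :: b :: l) = σ a b + chainSum σ (b :: l) := rfl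

lemma chainSum_nonneg (w σ : V → V → ℝ) (h : ∀ a b, 0 < w a b → 0 ≤ σ a b) :
    ∀ l : List V, l.Chain' (fun a b => 0 < w a b) → 0 ≤ chainSum σ l
  | [], _ => le_refl 0
  | [_], _ => le_refl 0
  | a :: b :: t, hc => by
    have h1 : 0 < w a b := (List.isChain_cons_cons.mp hc).1
    have h2 := chainSum_nonneg w σ h (b :: t) (List.isChain_cons_cons.mp hc).2
    have h3 := h a b h1
    rw [chainSum_cons]; linarith

lemma isPath_single (w : V → V → ℝ) (x : V) : isPath w x x [x] := by
  exact ⟨rfl, rfl, List.isChain_singleton x⟩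

lemma path_cons {w σ : V → V → ℝ} {x y z : V} {S : ℝ}
    (h : ∃ m, isPath w x y m ∧ chainSum σ m = S) (hw : 0 < w z x) :
    ∃ m, isPath w z y m ∧ chainSum σ m = σ z x + S := by
  obtain ⟨m, ⟨hh, hl, hc⟩, hS⟩ := h
  cases m with
  | nil => simp at hh
  | cons a t =>
    have ha : a = x := by simpa using hh
    subst ha
    refine ⟨z :: a :: t, ⟨rfl, ?_, ?_⟩, ?_⟩
    · simpa [List.getLast?_cons_cons] using hl
    · exact List.isChain_cons_cons.mpr ⟨hw, hc⟩
    · rw [chainSum_cons, hS]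

lemma isPath_reverse {w : V → V → ℝ} (hs : ∀ a b, w a b = w b a) {x y : V} {l : List V}
    (h : isPath w x y l) : isPath w y x l.reverse := by
  obtain ⟨hh, hl, hc⟩ := h
  refine ⟨?_, ?_, ?_⟩
  · rw [List.head?_reverse]; exact hl
  · rw [List.getLast?_reverse]; exact hh
  · show List.IsChain _ _; rw [List.isChain_reverse]
    exact hc.imp fun a b hab => by simpa [Function.flip_def, hs a b] using hab

lemma dPath_le {w σ : V → V → ℝ} (h : ∀ a b, 0 < w a b → 0 ≤ σ a b) {x y : V} {l : List V}
    (hp : isPath w x y l) : dPath w σ x y ≤ chainSum σ l := by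
  apply csInf_le
  · exact ⟨0, by rintro s ⟨m, hm, rfl⟩; exact chainSum_nonneg w σ h m hm.2.2⟩
  · exact ⟨l, hp, rfl⟩

lemma le_dPath {w σ : V → V → ℝ} {x y : V} {c : ℝ} (hne : ∃ l, isPath w x y l)
    (h : ∀ l, isPath w x y l → c ≤ chainSum σ l) : c ≤ dPath w σ x y := by
  apply le_csInf
  · obtain ⟨l, hl⟩ := hne; exact ⟨_, l, hl, rfl⟩
  · rintro s ⟨l, hp, rfl⟩; exact h l hp

lemma dPath_nonneg {w σ : V → V → ℝ} (h : ∀ a b, 0 < w a b → 0 ≤ σ a b) (x y : V) :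
    0 ≤ dPath w σ x y := by
  apply Real.sInf_nonneg
  rintro s ⟨l, hp, rfl⟩
  exact chainSum_nonneg w σ h l hp.2.2

universe u
lemma tsum_sum_type {α β : Type u} (f : α ⊕ β → ENNReal) :
    ∑' x, f x = ∑' a, f (Sum.inl a) + ∑' b, f (Sum.inr b) := by
  rw [← ((Equiv.sumEquivSigmaBool α β).symm.tsum_eq f), ENNReal.tsum_sigma', tsum_bool]
  rfl

end Basic

section Mod

variable {Vo : Type*} (wo σo : Vo → Vo → ℝ) (n : Vo → Vo → ℕ) (Ep : Set (Vo × Vo))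

/-- start-association: `u` is an old vertex associated to `z` with entry cost `c`. -/
def Assoc (z : MV wo n Ep) (u : Vo) (c : ℝ) : Prop :=
  (∃ x, z = Sum.inl x ∧ u = x ∧ c = 0) ∨
  (∃ q : NewV wo n Ep, z = Sum.inr q ∧
    ((u = q.val.1 ∧ c = (q.val.2.2 : ℝ) * (σo q.val.1 q.val.2.1 / (n q.val.1 q.val.2.1 : ℝ))) ∨
     (u = q.val.2.1 ∧
       c = ((n q.val.1 q.val.2.1 - q.val.2.2 : ℕ) : ℝ) *
         (σo q.val.1 q.val.2.1 / (n q.val.1 q.val.2.1 : ℝ)))))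

/-- end-association: `v` is an old vertex witnessing the end `t`. -/
def Back (t : MV wo n Ep) (v : Vo) : Prop :=
  (∃ x, t = Sum.inl x ∧ v = x) ∨
  (∃ q : NewV wo n Ep, t = Sum.inr q ∧ (v = q.val.1 ∨ v = q.val.2.1))

lemma project (hwo_symm : ∀ x y, wo x y = wo y x) (hσo_symm : ∀ x y, σo x y = σo y x)
    (hσo_pos : ∀ x y, 0 < wo x y → 0 < σo x y) :
    ∀ l : List (MV wo n Ep), ∀ z t : MV wo n Ep, isPath (mw wo n Ep) z t l →
      ∀ u c, Assoc wo σo n Ep z u c →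
      ∃ v, Back wo n Ep t v ∧
        ∃ l', isPath wo u v l' ∧ chainSum σo l' ≤ chainSum (mσ wo σo n Ep) l + c
  | [], _, _, hp => by exact absurd hp.1 (by simp)
  | [z₀], z, t, hp => by
    intro u c hassoc
    obtain ⟨hh, hl, -⟩ := hp
    have hz : z₀ = z := by simpa using hh
    have ht : z₀ = t := by simpa using hl
    subst hz; subst ht
    rcases hassoc with ⟨x, rfl, hu, rfl⟩ | ⟨q, heq, hbr⟩
    · exact ⟨u, Or.inl ⟨x, rfl, hu⟩, [u], isPath_single wo u, by
        rw [show chainSum (mσ wo σo n Ep) [Sum.inl x] = 0 from rfl,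
          show chainSum σo [u] = 0 from rfl]; norm_num⟩
    · subst heq
      obtain ⟨⟨a, b, i⟩, hEp', hwab, hi1, hi2⟩ := q
      replace hwab : 0 < wo a b := hwab
      have hσ : 0 < σo a b := hσo_pos a b hwab
      have hs : 0 ≤ σo a b / (n a b : ℝ) := div_nonneg hσ.le (Nat.cast_nonneg _)
      rcases hbr with ⟨hu, rfl⟩ | ⟨hu, rfl⟩
      · refine ⟨u, Or.inr ⟨_, rfl, Or.inl hu⟩, [u], isPath_single wo u, ?_⟩
        erw [show chainSum σo [u] = 0 from rfl]
        simpa using mul_nonneg (Nat.cast_nonneg (α := ℝ) i) hs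
      · refine ⟨u, Or.inr ⟨_, rfl, Or.inr hu⟩, [u], isPath_single wo u, ?_⟩
        erw [show chainSum σo [u] = 0 from rfl]
        simpa using mul_nonneg (Nat.cast_nonneg (α := ℝ) (n a b - i)) hs
  | z₀ :: z₁ :: rest, z, t, hp => by
    intro u c hassoc
    obtain ⟨hh, hl, hc⟩ := hp
    have hz : z₀ = z := by simpa using hh
    subst hz
    have hE : 0 < mw wo n Ep z₀ z₁ := (List.isChain_cons_cons.mp hc).1
    have tail : isPath (mw wo n Ep) z₁ t (z₁ :: rest) :=
      ⟨rfl, by simpa [List.getLast?_cons_cons] using hl, (List.isChain_cons_cons.mp hc).2⟩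
    have hsum : chainSum (mσ wo σo n Ep) (z₀ :: z₁ :: rest)
        = mσ wo σo n Ep z₀ z₁ + chainSum (mσ wo σo n Ep) (z₁ :: rest) := rfl
    have IH := project hwo_symm hσo_symm hσo_pos (z₁ :: rest) z₁ t tail
    rcases z₀ with x | q
    -- z₀ = inl x
    · have hux : u = x := by
        rcases hassoc with ⟨x', hx', hu, -⟩ | ⟨q', hq', -⟩
        · rw [hu]; exact (by simpa using hx' : x = x').symm
        · simp at hq'
      have hc0 : c = 0 := by
        rcases hassoc with ⟨x', -, -, hcc⟩ | ⟨q', hq', -⟩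
        · exact hcc
        · simp at hq'
      rcases z₁ with x' | q
      · simp [mw] at hE
      · obtain ⟨⟨a, b, i⟩, hEp', hwab, hi1, hi2⟩ := q
        replace hwab : 0 < wo a b := hwab
        replace hi1 : 1 ≤ i := hi1
        replace hi2 : i ≤ n a b - 1 := hi2
        have hσ : 0 < σo a b := hσo_pos a b hwab
        have hN1 : 1 ≤ n a b := by omega
        have hcast : ((n a b - 1 : ℕ) : ℝ) = (n a b : ℝ) - 1 := by
          rw [Nat.cast_sub hN1]; norm_num
        simp only [mw] at hE
        have hcond : (x = a ∧ i = 1) ∨ (x = b ∧ i = n a b - 1) := by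
          by_contra hcon; rw [if_neg hcon] at hE; exact lt_irrefl 0 hE
        have hmσ : mσ wo σo n Ep (Sum.inl x) (Sum.inr ⟨(a, b, i), hEp', hwab, hi1, hi2⟩)
            = σo a b / (n a b : ℝ) := by
          simp only [mσ]; rw [if_pos hcond]
        rw [hsum, hmσ, hc0]
        rcases hcond with ⟨hxa, hi⟩ | ⟨hxb, hi⟩
        · obtain ⟨v, hback, l', hl', hle⟩ := IH a ((i : ℝ) * (σo a b / (n a b : ℝ)))
            (Or.inr ⟨_, rfl, Or.inl ⟨rfl, rfl⟩⟩)
          refine ⟨v, hback, l', by rw [hux, hxa]; exact hl', ?_⟩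
          have hi' : (i : ℝ) = 1 := by exact_mod_cast hi
          rw [hi'] at hle
          linarith
        · obtain ⟨v, hback, l', hl', hle⟩ := IH b
            (((n a b - i : ℕ) : ℝ) * (σo a b / (n a b : ℝ)))
            (Or.inr ⟨_, rfl, Or.inr ⟨rfl, rfl⟩⟩)
          refine ⟨v, hback, l', by rw [hux, hxb]; exact hl', ?_⟩
          have hi' : ((n a b - i : ℕ) : ℝ) = 1 := by
            rw [show n a b - i = 1 from by omega]; norm_num
          rw [hi'] at hle
          linarith
    -- z₀ = inr q
    · obtain ⟨⟨a, b, i⟩, hEp', hwab, hi1, hi2⟩ := q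
      replace hwab : 0 < wo a b := hwab
      replace hi1 : 1 ≤ i := hi1
      replace hi2 : i ≤ n a b - 1 := hi2
      have hσ : 0 < σo a b := hσo_pos a b hwab
      have hN1 : 1 ≤ n a b := by omega
      have hNpos : (0:ℝ) < (n a b : ℝ) := by exact_mod_cast Nat.pos_of_ne_zero (by omega)
      have hs : 0 < σo a b / (n a b : ℝ) := div_pos hσ hNpos
      have hcast : ((n a b - 1 : ℕ) : ℝ) = (n a b : ℝ) - 1 := by
        rw [Nat.cast_sub hN1]; norm_num
      have hkey : σo a b / (n a b : ℝ) + ((n a b : ℝ) - 1) * (σo a b / (n a b : ℝ))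
          = σo a b := by field_simp; ring
      have hbr : (u = a ∧ c = (i : ℝ) * (σo a b / (n a b : ℝ))) ∨
          (u = b ∧ c = ((n a b - i : ℕ) : ℝ) * (σo a b / (n a b : ℝ))) := by
        rcases hassoc with ⟨x', hx', -⟩ | ⟨q', hq', hbr⟩
        · simp at hx'
        · rw [show q' = ⟨(a, b, i), hEp', hwab, hi1, hi2⟩ from
            ((Sum.inr.inj hq' : (⟨(a, b, i), hEp', hwab, hi1, hi2⟩ : NewV wo n Ep) = q')).symm]
            at hbr
          exact hbr
      rcases z₁ with x | q'
      -- inr q, inl x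
      · simp only [mw] at hE
        have hcond : (x = a ∧ i = 1) ∨ (x = b ∧ i = n a b - 1) := by
          by_contra hcon; rw [if_neg hcon] at hE; exact lt_irrefl 0 hE
        have hmσ : mσ wo σo n Ep (Sum.inr ⟨(a, b, i), hEp', hwab, hi1, hi2⟩) (Sum.inl x)
            = σo a b / (n a b : ℝ) := by
          simp only [mσ]; rw [if_pos hcond]
        obtain ⟨v, hback, l', hl', hle⟩ := IH x 0 (Or.inl ⟨x, rfl, rfl, rfl⟩)
        rw [hsum, hmσ]
        rcases hbr with ⟨hu, rfl⟩ | ⟨hu, rfl⟩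
        · rcases hcond with ⟨hxa, hi⟩ | ⟨hxb, hi⟩
          · -- u = a = x, reuse l'
            refine ⟨v, hback, l', by rw [hu, ← hxa]; exact hl', ?_⟩
            have : (0:ℝ) ≤ (i : ℝ) * (σo a b / (n a b : ℝ)) :=
              mul_nonneg (Nat.cast_nonneg _) hs.le
            linarith
          · -- u = a, x = b : prepend a
            have hw' : 0 < wo a x := by rw [hxb]; exact hwab
            obtain ⟨m, hm, hmS⟩ := path_cons ⟨l', hl', rfl⟩ hw'
            refine ⟨v, hback, m, by rw [hu]; exact hm, ?_⟩
            have hi' : (i : ℝ) = (n a b : ℝ) - 1 := by rw [hi]; exact hcast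
            rw [hxb] at hle
            rw [hmS, hxb, hi']
            linarith
        · rcases hcond with ⟨hxa, hi⟩ | ⟨hxb, hi⟩
          · -- u = b, x = a : prepend b
            have hw' : 0 < wo b x := by rw [hxa, hwo_symm]; exact hwab
            obtain ⟨m, hm, hmS⟩ := path_cons ⟨l', hl', rfl⟩ hw'
            refine ⟨v, hback, m, by rw [hu]; exact hm, ?_⟩
            have hni' : ((n a b - i : ℕ) : ℝ) = (n a b : ℝ) - 1 := by
              rw [hi]; exact hcast
            rw [hxa] at hle
            rw [hmS, hxa, hσo_symm b a, hni']
            linarith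
          · -- u = b = x, reuse l'
            refine ⟨v, hback, l', by rw [hu, ← hxb]; exact hl', ?_⟩
            have : (0:ℝ) ≤ ((n a b - i : ℕ) : ℝ) * (σo a b / (n a b : ℝ)) :=
              mul_nonneg (Nat.cast_nonneg _) hs.le
            linarith
      -- inr q, inr q'
      · obtain ⟨⟨a', b', j⟩, hEp'', hwab', hj1, hj2⟩ := q'
        replace hwab' : 0 < wo a' b' := hwab'
        replace hj1 : 1 ≤ j := hj1
        replace hj2 : j ≤ n a' b' - 1 := hj2
        simp only [mw] at hE
        have hcond : a = a' ∧ b = b' ∧ (i = j + 1 ∨ j = i + 1) := by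
          by_contra hcon; rw [if_neg hcon] at hE; exact lt_irrefl 0 hE
        obtain ⟨ha, hb, hij⟩ := hcond
        have hmσ : mσ wo σo n Ep (Sum.inr ⟨(a, b, i), hEp', hwab, hi1, hi2⟩)
            (Sum.inr ⟨(a', b', j), hEp'', hwab', hj1, hj2⟩) = σo a b / (n a b : ℝ) := by
          simp only [mσ]; rw [if_pos ⟨ha, hb, hij⟩]
        rw [hsum, hmσ]
        rcases hbr with ⟨hu, rfl⟩ | ⟨hu, rfl⟩
        · obtain ⟨v, hback, l', hl', hle⟩ := IH a' ((j : ℝ) * (σo a' b' / (n a' b' : ℝ)))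
            (Or.inr ⟨_, rfl, Or.inl ⟨rfl, rfl⟩⟩)
          refine ⟨v, hback, l', by rw [hu, ha]; exact hl', ?_⟩
          have hceq : (j : ℝ) * (σo a' b' / (n a' b' : ℝ))
              = (j : ℝ) * (σo a b / (n a b : ℝ)) := by rw [← ha, ← hb]
          rw [hceq] at hle
          have hji : (j : ℝ) ≤ (i : ℝ) + 1 := by exact_mod_cast Nat.le_of_lt_succ (by omega)
          have h2 := mul_le_mul_of_nonneg_right hji hs.le
          have hexp : ((i:ℝ) + 1) * (σo a b / (n a b : ℝ))
              = (i:ℝ) * (σo a b / (n a b : ℝ)) + σo a b / (n a b : ℝ) := by ring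
          linarith
        · obtain ⟨v, hback, l', hl', hle⟩ := IH b'
            (((n a' b' - j : ℕ) : ℝ) * (σo a' b' / (n a' b' : ℝ)))
            (Or.inr ⟨_, rfl, Or.inr ⟨rfl, rfl⟩⟩)
          refine ⟨v, hback, l', by rw [hu, hb]; exact hl', ?_⟩
          have hceq : ((n a' b' - j : ℕ) : ℝ) * (σo a' b' / (n a' b' : ℝ))
              = ((n a b - j : ℕ) : ℝ) * (σo a b / (n a b : ℝ)) := by rw [← ha, ← hb]
          rw [hceq] at hle
          rw [← ha, ← hb] at hj2
          have hji : ((n a b - j : ℕ) : ℝ) ≤ ((n a b - i : ℕ) : ℝ) + 1 := by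
            exact_mod_cast Nat.le_of_lt_succ (by omega)
          have h2 := mul_le_mul_of_nonneg_right hji hs.le
          have hexp : (((n a b - i : ℕ) : ℝ) + 1) * (σo a b / (n a b : ℝ))
              = ((n a b - i : ℕ) : ℝ) * (σo a b / (n a b : ℝ)) + σo a b / (n a b : ℝ) := by
            ring
          linarith
termination_by l => l.length

end Mod

section Lift

variable {Vo : Type*} (wo σo : Vo → Vo → ℝ) (n : Vo → Vo → ℕ) (Ep : Set (Vo × Vo))

lemma mw_symm : ∀ p q : MV wo n Ep, mw wo n Ep p q = mw wo n Ep q p := by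
  rintro (x | p) (y | q)
  · rfl
  · rfl
  · rfl
  · simp only [mw]
    by_cases h : p.val.1 = q.val.1 ∧ p.val.2.1 = q.val.2.1 ∧
        (p.val.2.2 = q.val.2.2 + 1 ∨ q.val.2.2 = p.val.2.2 + 1)
    · rw [if_pos h, if_pos ⟨h.1.symm, h.2.1.symm, h.2.2.symm⟩, h.1, h.2.1]
    · rw [if_neg h, if_neg (fun hc => h ⟨hc.1.symm, hc.2.1.symm, hc.2.2.symm⟩)]

lemma mσ_nonneg (hσo_pos : ∀ x y, 0 < wo x y → 0 < σo x y) (p q : MV wo n Ep) :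
    0 ≤ mσ wo σo n Ep p q := by
  rcases p with x | p <;> rcases q with y | q <;> simp only [mσ]
  · exact le_refl 0
  · split
    · exact div_nonneg (hσo_pos _ _ q.prop.2.1).le (Nat.cast_nonneg _)
    · exact le_refl 0
  · split
    · exact div_nonneg (hσo_pos _ _ p.prop.2.1).le (Nat.cast_nonneg _)
    · exact le_refl 0
  · split
    · exact div_nonneg (hσo_pos _ _ p.prop.2.1).le (Nat.cast_nonneg _)
    · exact le_refl 0

open Classical in
lemma mw_inl_inr (x : Vo) (q : NewV wo n Ep) :
    mw wo n Ep (Sum.inl x) (Sum.inr q) =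
      if (x = q.val.1 ∧ q.val.2.2 = 1) ∨
          (x = q.val.2.1 ∧ q.val.2.2 = n q.val.1 q.val.2.1 - 1)
      then (n q.val.1 q.val.2.1 : ℝ) * wo q.val.1 q.val.2.1 else 0 := rfl

open Classical in
lemma mw_inr_inl (q : NewV wo n Ep) (x : Vo) :
    mw wo n Ep (Sum.inr q) (Sum.inl x) =
      if (x = q.val.1 ∧ q.val.2.2 = 1) ∨
          (x = q.val.2.1 ∧ q.val.2.2 = n q.val.1 q.val.2.1 - 1)
      then (n q.val.1 q.val.2.1 : ℝ) * wo q.val.1 q.val.2.1 else 0 := rfl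

open Classical in
lemma mw_inr_inr (p q : NewV wo n Ep) :
    mw wo n Ep (Sum.inr p) (Sum.inr q) =
      if p.val.1 = q.val.1 ∧ p.val.2.1 = q.val.2.1 ∧
          (p.val.2.2 = q.val.2.2 + 1 ∨ q.val.2.2 = p.val.2.2 + 1)
      then (n p.val.1 p.val.2.1 : ℝ) * wo p.val.1 p.val.2.1 else 0 := rfl

open Classical in
lemma mσ_inl_inr (x : Vo) (q : NewV wo n Ep) :
    mσ wo σo n Ep (Sum.inl x) (Sum.inr q) =
      if (x = q.val.1 ∧ q.val.2.2 = 1) ∨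
          (x = q.val.2.1 ∧ q.val.2.2 = n q.val.1 q.val.2.1 - 1)
      then σo q.val.1 q.val.2.1 / (n q.val.1 q.val.2.1 : ℝ) else 0 := rfl

open Classical in
lemma mσ_inr_inl (q : NewV wo n Ep) (x : Vo) :
    mσ wo σo n Ep (Sum.inr q) (Sum.inl x) =
      if (x = q.val.1 ∧ q.val.2.2 = 1) ∨
          (x = q.val.2.1 ∧ q.val.2.2 = n q.val.1 q.val.2.1 - 1)
      then σo q.val.1 q.val.2.1 / (n q.val.1 q.val.2.1 : ℝ) else 0 := rfl

open Classical in
lemma mσ_inr_inr (p q : NewV wo n Ep) :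
    mσ wo σo n Ep (Sum.inr p) (Sum.inr q) =
      if p.val.1 = q.val.1 ∧ p.val.2.1 = q.val.2.1 ∧
          (p.val.2.2 = q.val.2.2 + 1 ∨ q.val.2.2 = p.val.2.2 + 1)
      then σo p.val.1 p.val.2.1 / (n p.val.1 p.val.2.1 : ℝ) else 0 := rfl

lemma L1 {a b : Vo} (hE : (a, b) ∈ Ep) (hw : 0 < wo a b) {y : Vo} {S : ℝ}
    (hm : ∃ m, isPath (mw wo n Ep) (Sum.inl a) (Sum.inl y) m ∧
      chainSum (mσ wo σo n Ep) m = S) :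
    ∀ i (h1 : 1 ≤ i) (h2 : i ≤ n a b - 1),
      ∃ m, isPath (mw wo n Ep) (Sum.inr ⟨(a, b, i), hE, hw, h1, h2⟩) (Sum.inl y) m ∧
        chainSum (mσ wo σo n Ep) m = (i : ℝ) * (σo a b / (n a b : ℝ)) + S := by
  intro i h1
  induction i, h1 using Nat.le_induction with
  | base =>
    intro h2
    have hN : (0:ℝ) < (n a b : ℝ) := by exact_mod_cast (by omega : 0 < n a b)
    have hwpos : 0 < mw wo n Ep (Sum.inr ⟨(a, b, 1), hE, hw, le_refl 1, h2⟩) (Sum.inl a) := by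
      erw [mw_inr_inl, if_pos (Or.inl ⟨rfl, rfl⟩)]
      exact mul_pos hN hw
    obtain ⟨m, hm', hS⟩ := path_cons hm hwpos
    refine ⟨m, hm', ?_⟩
    rw [hS, show mσ wo σo n Ep (Sum.inr ⟨(a, b, 1), hE, hw, le_refl 1, h2⟩) (Sum.inl a)
      = σo a b / (n a b : ℝ) from by erw [mσ_inr_inl, if_pos (Or.inl ⟨rfl, rfl⟩)]]
    norm_num
  | succ i hi IH =>
    intro h2
    have h2' : i ≤ n a b - 1 := by omega
    obtain ⟨m, hm', hS⟩ := IH h2'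
    have hN : (0:ℝ) < (n a b : ℝ) := by exact_mod_cast (by omega : 0 < n a b)
    have h1'' : 1 ≤ i + 1 := Nat.succ_le_succ (Nat.zero_le i)
    have hwpos : 0 < mw wo n Ep (Sum.inr ⟨(a, b, i + 1), hE, hw, h1'', h2⟩)
        (Sum.inr ⟨(a, b, i), hE, hw, hi, h2'⟩) := by
      erw [mw_inr_inr, if_pos ⟨rfl, rfl, Or.inl rfl⟩]
      exact mul_pos hN hw
    obtain ⟨m', hm'', hS'⟩ := path_cons ⟨m, hm', hS⟩ hwpos
    refine ⟨m', hm'', ?_⟩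
    rw [hS', show mσ wo σo n Ep (Sum.inr ⟨(a, b, i + 1), hE, hw, h1'', h2⟩)
      (Sum.inr ⟨(a, b, i), hE, hw, hi, h2'⟩) = σo a b / (n a b : ℝ) from by
        erw [mσ_inr_inr, if_pos ⟨rfl, rfl, Or.inl rfl⟩]]
    push_cast
    ring

lemma L2 {a b : Vo} (hE : (a, b) ∈ Ep) (hw : 0 < wo a b) {y : Vo} {S : ℝ}
    (hm : ∃ m, isPath (mw wo n Ep) (Sum.inl b) (Sum.inl y) m ∧
      chainSum (mσ wo σo n Ep) m = S) :
    ∀ i (h1 : 1 ≤ i) (h2 : i ≤ n a b - 1),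
      ∃ m, isPath (mw wo n Ep) (Sum.inr ⟨(a, b, i), hE, hw, h1, h2⟩) (Sum.inl y) m ∧
        chainSum (mσ wo σo n Ep) m
          = ((n a b - i : ℕ) : ℝ) * (σo a b / (n a b : ℝ)) + S := by
  intro i h1 h2
  obtain ⟨k, hk⟩ : ∃ k, n a b - 1 - i = k := ⟨_, rfl⟩
  induction k generalizing i with
  | zero =>
    have hieq : i = n a b - 1 := by omega
    have hN : (0:ℝ) < (n a b : ℝ) := by exact_mod_cast (by omega : 0 < n a b)
    have hwpos : 0 < mw wo n Ep (Sum.inr ⟨(a, b, i), hE, hw, h1, h2⟩) (Sum.inl b) := by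
      erw [mw_inr_inl, if_pos (Or.inr ⟨rfl, hieq⟩)]
      exact mul_pos hN hw
    obtain ⟨m, hm', hS⟩ := path_cons hm hwpos
    refine ⟨m, hm', ?_⟩
    rw [hS, show mσ wo σo n Ep (Sum.inr ⟨(a, b, i), hE, hw, h1, h2⟩) (Sum.inl b)
      = σo a b / (n a b : ℝ) from by erw [mσ_inr_inl, if_pos (Or.inr ⟨rfl, hieq⟩)]]
    rw [show n a b - i = 1 from by omega]
    norm_num
  | succ k IH =>
    have h1' : 1 ≤ i + 1 := by omega
    have h2' : i + 1 ≤ n a b - 1 := by omega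
    obtain ⟨m, hm', hS⟩ := IH (i + 1) h1' h2' (by omega)
    have hN : (0:ℝ) < (n a b : ℝ) := by exact_mod_cast (by omega : 0 < n a b)
    have hwpos : 0 < mw wo n Ep (Sum.inr ⟨(a, b, i), hE, hw, h1, h2⟩)
        (Sum.inr ⟨(a, b, i + 1), hE, hw, h1', h2'⟩) := by
      erw [mw_inr_inr, if_pos ⟨rfl, rfl, Or.inr rfl⟩]
      exact mul_pos hN hw
    obtain ⟨m', hm'', hS'⟩ := path_cons ⟨m, hm', hS⟩ hwpos
    refine ⟨m', hm'', ?_⟩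
    rw [hS', show mσ wo σo n Ep (Sum.inr ⟨(a, b, i), hE, hw, h1, h2⟩)
      (Sum.inr ⟨(a, b, i + 1), hE, hw, h1', h2'⟩) = σo a b / (n a b : ℝ) from by
        erw [mσ_inr_inr, if_pos ⟨rfl, rfl, Or.inr rfl⟩]]
    have hcst : ((n a b - i : ℕ) : ℝ) = ((n a b - (i + 1) : ℕ) : ℝ) + 1 := by
      exact_mod_cast (by omega : n a b - i = (n a b - (i + 1)) + 1)
    rw [hcst]
    ring

lemma edge_extend (hwo_symm : ∀ x y, wo x y = wo y x) (hσo_symm : ∀ x y, σo x y = σo y x)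
    (hn2 : ∀ x y, 0 < wo x y → 2 ≤ n x y)
    (hEp_orient : ∀ x y, 0 < wo x y → Xor' ((x, y) ∈ Ep) ((y, x) ∈ Ep))
    {x b y : Vo} {S : ℝ} (hw : 0 < wo x b)
    (hm : ∃ m, isPath (mw wo n Ep) (Sum.inl b) (Sum.inl y) m ∧
      chainSum (mσ wo σo n Ep) m = S) :
    ∃ m, isPath (mw wo n Ep) (Sum.inl x) (Sum.inl y) m ∧
      chainSum (mσ wo σo n Ep) m = σo x b + S := by
  rcases hEp_orient x b hw with ⟨hE, -⟩ | ⟨hE, -⟩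
  · have hn : 2 ≤ n x b := hn2 x b hw
    have hN : (0:ℝ) < (n x b : ℝ) := by exact_mod_cast (by omega : 0 < n x b)
    have hb1 : 1 ≤ n x b - 1 := by omega
    obtain ⟨m, hm', hS⟩ := L2 wo σo n Ep hE hw hm 1 (le_refl 1) hb1
    have hwpos : 0 < mw wo n Ep (Sum.inl x)
        (Sum.inr ⟨(x, b, 1), hE, hw, le_refl 1, hb1⟩) := by
      erw [mw_inl_inr, if_pos (Or.inl ⟨rfl, rfl⟩)]
      exact mul_pos hN hw
    obtain ⟨m', hm'', hS'⟩ := path_cons ⟨m, hm', hS⟩ hwpos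
    refine ⟨m', hm'', ?_⟩
    rw [hS', show mσ wo σo n Ep (Sum.inl x) (Sum.inr ⟨(x, b, 1), hE, hw, le_refl 1, hb1⟩)
      = σo x b / (n x b : ℝ) from by erw [mσ_inl_inr, if_pos (Or.inl ⟨rfl, rfl⟩)]]
    have hcast : ((n x b - 1 : ℕ) : ℝ) = (n x b : ℝ) - 1 := by
      rw [Nat.cast_sub (by omega)]; norm_num
    rw [hcast]
    field_simp
    ring
  · have hw' : 0 < wo b x := by rw [hwo_symm]; exact hw
    have hn : 2 ≤ n b x := hn2 b x hw'
    have hN : (0:ℝ) < (n b x : ℝ) := by exact_mod_cast (by omega : 0 < n b x)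
    have hb1 : 1 ≤ n b x - 1 := by omega
    obtain ⟨m, hm', hS⟩ := L1 wo σo n Ep hE hw' hm (n b x - 1) hb1 (le_refl _)
    have hwpos : 0 < mw wo n Ep (Sum.inl x)
        (Sum.inr ⟨(b, x, n b x - 1), hE, hw', hb1, le_refl _⟩) := by
      erw [mw_inl_inr, if_pos (Or.inr ⟨rfl, rfl⟩)]
      exact mul_pos hN hw'
    obtain ⟨m', hm'', hS'⟩ := path_cons ⟨m, hm', hS⟩ hwpos
    refine ⟨m', hm'', ?_⟩
    rw [hS', show mσ wo σo n Ep (Sum.inl x)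
      (Sum.inr ⟨(b, x, n b x - 1), hE, hw', hb1, le_refl _⟩)
      = σo b x / (n b x : ℝ) from by erw [mσ_inl_inr, if_pos (Or.inr ⟨rfl, rfl⟩)]]
    have hcast : ((n b x - 1 : ℕ) : ℝ) = (n b x : ℝ) - 1 := by
      rw [Nat.cast_sub (by omega)]; norm_num
    rw [hcast, hσo_symm x b]
    field_simp
    ring

lemma lift_path (hwo_symm : ∀ x y, wo x y = wo y x) (hσo_symm : ∀ x y, σo x y = σo y x)
    (hn2 : ∀ x y, 0 < wo x y → 2 ≤ n x y)
    (hEp_orient : ∀ x y, 0 < wo x y → Xor' ((x, y) ∈ Ep) ((y, x) ∈ Ep)) :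
    ∀ l : List Vo, ∀ x y : Vo, isPath wo x y l →
      ∃ m, isPath (mw wo n Ep) (Sum.inl x) (Sum.inl y) m ∧
        chainSum (mσ wo σo n Ep) m = chainSum σo l
  | [], x, y, hp => absurd hp.1 (by simp)
  | [a], x, y, hp => by
    have hx : a = x := by simpa using hp.1
    have hy : a = y := by simpa using hp.2.1
    subst hx; subst hy
    exact ⟨[Sum.inl a], ⟨rfl, rfl, List.isChain_singleton _⟩, rfl⟩
  | a :: b :: t, x, y, hp => by
    have hx : a = x := by simpa using hp.1
    subst hx
    have hw : 0 < wo a b := (List.isChain_cons_cons.mp hp.2.2).1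
    have tailp : isPath wo b y (b :: t) :=
      ⟨rfl, by simpa [List.getLast?_cons_cons] using hp.2.1, (List.isChain_cons_cons.mp hp.2.2).2⟩
    obtain ⟨m, hm, hS⟩ :=
      lift_path hwo_symm hσo_symm hn2 hEp_orient (b :: t) b y tailp
    obtain ⟨m', hm', hS'⟩ := edge_extend wo σo n Ep hwo_symm hσo_symm hn2 hEp_orient hw
      ⟨m, hm, hS⟩
    exact ⟨m', hm', by rw [hS', chainSum_cons]⟩
termination_by l => l.length

lemma reach_new (hwo_symm : ∀ x y, wo x y = wo y x) (hσo_symm : ∀ x y, σo x y = σo y x)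
    (hn2 : ∀ x y, 0 < wo x y → 2 ≤ n x y)
    (hEp_orient : ∀ x y, 0 < wo x y → Xor' ((x, y) ∈ Ep) ((y, x) ∈ Ep))
    (hconn : ∀ x y : Vo, ∃ l : List Vo, isPath wo x y l)
    (x₀ : Vo) (q : NewV wo n Ep) :
    ∃ m, isPath (mw wo n Ep) (Sum.inl x₀) (Sum.inr q) m := by
  obtain ⟨⟨a, b, i⟩, hE, hw, h1, h2⟩ := q
  obtain ⟨l, hl⟩ := hconn a x₀
  obtain ⟨m, hm, hS⟩ := lift_path wo σo n Ep hwo_symm hσo_symm hn2 hEp_orient l a x₀ hl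
  obtain ⟨m', hm', -⟩ := L1 wo σo n Ep hE hw ⟨m, hm, hS⟩ i h1 h2
  exact ⟨m'.reverse, isPath_reverse (mw_symm wo n Ep) hm'⟩

end Lift

section Dist

variable {Vo : Type*} (wo σo : Vo → Vo → ℝ) (n : Vo → Vo → ℕ) (Ep : Set (Vo × Vo))
variable (hwo_symm : ∀ x y, wo x y = wo y x) (hσo_symm : ∀ x y, σo x y = σo y x)
  (hσo_pos : ∀ x y, 0 < wo x y → 0 < σo x y)
  (hn2 : ∀ x y, 0 < wo x y → 2 ≤ n x y)
  (hEp_orient : ∀ x y, 0 < wo x y → Xor' ((x, y) ∈ Ep) ((y, x) ∈ Ep))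
  (hconn : ∀ x y : Vo, ∃ l : List Vo, isPath wo x y l)

include hwo_symm hσo_symm hσo_pos hn2 hEp_orient hconn

lemma dPath_eq_mod (x y : Vo) :
    dPath (mw wo n Ep) (mσ wo σo n Ep) (Sum.inl x) (Sum.inl y) = dPath wo σo x y := by
  apply le_antisymm
  · apply le_csInf
    · obtain ⟨l, hl⟩ := hconn x y; exact ⟨_, l, hl, rfl⟩
    · rintro s ⟨l, hp, rfl⟩
      obtain ⟨m, hm, hS⟩ := lift_path wo σo n Ep hwo_symm hσo_symm hn2 hEp_orient l x y hp
      calc dPath (mw wo n Ep) (mσ wo σo n Ep) (Sum.inl x) (Sum.inl y)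
          ≤ chainSum (mσ wo σo n Ep) m :=
            dPath_le (fun a b _ => mσ_nonneg wo σo n Ep hσo_pos a b) hm
        _ = chainSum σo l := hS
  · apply le_csInf
    · obtain ⟨l, hl⟩ := hconn x y
      obtain ⟨m, hm, -⟩ := lift_path wo σo n Ep hwo_symm hσo_symm hn2 hEp_orient l x y hl
      exact ⟨_, m, hm, rfl⟩
    · rintro s ⟨m, hm, rfl⟩
      obtain ⟨v, hback, l', hl', hle⟩ := project wo σo n Ep hwo_symm hσo_symm hσo_pos
        m _ _ hm x 0 (Or.inl ⟨x, rfl, rfl, rfl⟩)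
      have hv : v = y := by
        rcases hback with ⟨x', hx', hv⟩ | ⟨q, hq, -⟩
        · rw [hv]; exact (by simpa using hx' : y = x').symm
        · simp at hq
      have hd : dPath wo σo x y ≤ chainSum σo l' :=
        dPath_le (fun a b h => (hσo_pos a b h).le) (hv ▸ hl')
      linarith

lemma min_endpoint (x₀ : Vo) (q : NewV wo n Ep) :
    min (dPath wo σo x₀ q.val.1) (dPath wo σo x₀ q.val.2.1)
      ≤ dPath (mw wo n Ep) (mσ wo σo n Ep) (Sum.inl x₀) (Sum.inr q) := by
  apply le_csInf
  · obtain ⟨m, hm⟩ := reach_new wo σo n Ep hwo_symm hσo_symm hn2 hEp_orient hconn x₀ q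
    exact ⟨_, m, hm, rfl⟩
  · rintro s ⟨m, hm, rfl⟩
    obtain ⟨v, hback, l', hl', hle⟩ := project wo σo n Ep hwo_symm hσo_symm hσo_pos
      m _ _ hm x₀ 0 (Or.inl ⟨x₀, rfl, rfl, rfl⟩)
    have hd : dPath wo σo x₀ v ≤ chainSum σo l' :=
      dPath_le (fun a b h => (hσo_pos a b h).le) hl'
    rcases hback with ⟨x', hx', -⟩ | ⟨q', hq', hv⟩
    · simp at hx'
    · have hq'q : q' = q := by simpa using hq'.symm
      subst hq'q
      rcases hv with hv | hv
      · calc min (dPath wo σo x₀ q'.val.1) (dPath wo σo x₀ q'.val.2.1)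
            ≤ dPath wo σo x₀ q'.val.1 := min_le_left _ _
          _ ≤ chainSum σo l' := hv ▸ hd
          _ ≤ _ := by linarith
      · calc min (dPath wo σo x₀ q'.val.1) (dPath wo σo x₀ q'.val.2.1)
            ≤ dPath wo σo x₀ q'.val.2.1 := min_le_right _ _
          _ ≤ chainSum σo l' := hv ▸ hd
          _ ≤ _ := by linarith

end Dist

section Fiber

variable {Vo : Type*} (wo σo : Vo → Vo → ℝ) (μo : Vo → ℝ) (n : Vo → Vo → ℕ) (Ep : Set (Vo × Vo))

lemma mμ_inl (x : Vo) : mμ wo σo μo n Ep (Sum.inl x) = μo x := rfl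

lemma mμ_inr (p : NewV wo n Ep) : mμ wo σo μo n Ep (Sum.inr p)
    = 2 * wo p.val.1 p.val.2.1 * σo p.val.1 p.val.2.1 ^ 2 / (n p.val.1 p.val.2.1 : ℝ) := rfl

lemma mμ_nonneg (hwo_nonneg : ∀ x y, 0 ≤ wo x y) (hμo_pos : ∀ x, 0 < μo x) :
    ∀ p, 0 ≤ mμ wo σo μo n Ep p := by
  rintro (x | p)
  · exact (hμo_pos x).le
  · rw [mμ_inr]
    exact div_nonneg (mul_nonneg (mul_nonneg (by norm_num) (hwo_nonneg _ _)) (sq_nonneg _))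
      (Nat.cast_nonneg _)

open Classical in
lemma fiber_bound (hwo_symm : ∀ x y, wo x y = wo y x) (hwo_nonneg : ∀ x y, 0 ≤ wo x y)
    (hσo_symm : ∀ x y, σo x y = σo y x)
    (hn_symm : ∀ x y, n x y = n y x) (hn2 : ∀ x y, 0 < wo x y → 2 ≤ n x y)
    (hloc : ∀ x, {y | 0 < wo x y}.Finite)
    (hadapt : ∀ x, ∑' y, wo x y * σo x y ^ 2 ≤ μo x)
    (hEp_orient : ∀ x y, 0 < wo x y → Xor' ((x, y) ∈ Ep) ((y, x) ∈ Ep))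
    (u0 : Vo) {ι : Type*} (k : ι → NewV wo n Ep) (hk : Function.Injective k)
    (hend : ∀ t : ι, u0 = (k t).val.1 ∨ u0 = (k t).val.2.1) :
    ∑' t : ι, ENNReal.ofReal (mμ wo σo μo n Ep (Sum.inr (k t)))
      ≤ ENNReal.ofReal (2 * μo u0) := by
  set φ : Vo × ℕ → ENNReal := fun vi =>
    if 0 < wo u0 vi.1 ∧ 1 ≤ vi.2 ∧ vi.2 ≤ n u0 vi.1 - 1
    then ENNReal.ofReal (2 * wo u0 vi.1 * σo u0 vi.1 ^ 2 / (n u0 vi.1 : ℝ)) else 0 with hφ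
  set Ψ : ι → Vo × ℕ := fun t =>
    (if u0 = (k t).val.1 then (k t).val.2.1 else (k t).val.1, (k t).val.2.2) with hΨ
  have hΨapp : ∀ t, Ψ t
      = (if u0 = (k t).val.1 then (k t).val.2.1 else (k t).val.1, (k t).val.2.2) :=
    fun t => by rw [hΨ]
  have hφapp : ∀ v i, φ (v, i)
      = if 0 < wo u0 v ∧ 1 ≤ i ∧ i ≤ n u0 v - 1
        then ENNReal.ofReal (2 * wo u0 v * σo u0 v ^ 2 / (n u0 v : ℝ)) else 0 :=
    fun v i => by rw [hφ]
  -- pointwise identification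
  have hpt : ∀ t, ENNReal.ofReal (mμ wo σo μo n Ep (Sum.inr (k t))) = φ (Ψ t) := by
    intro t
    obtain ⟨hEpk, hwk, h1k, h2k⟩ := (k t).prop
    by_cases hc : u0 = (k t).val.1
    · have hw' : 0 < wo u0 (k t).val.2.1 := by rw [hc]; exact hwk
      have h2' : (k t).val.2.2 ≤ n u0 (k t).val.2.1 - 1 := by rw [hc]; exact h2k
      rw [hΨapp t, if_pos hc, hφapp, if_pos ⟨hw', h1k, h2'⟩, mμ_inr, hc]
    · have hc' : u0 = (k t).val.2.1 := (hend t).resolve_left hc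
      have hw' : 0 < wo u0 (k t).val.1 := by
        rw [hc', hwo_symm]; exact hwk
      have h2' : (k t).val.2.2 ≤ n u0 (k t).val.1 - 1 := by
        rw [hc', hn_symm]; exact h2k
      rw [hΨapp t, if_neg hc, hφapp, if_pos ⟨hw', h1k, h2'⟩, mμ_inr, hc',
        hwo_symm (k t).val.2.1 (k t).val.1, hσo_symm (k t).val.2.1 (k t).val.1,
        hn_symm (k t).val.2.1 (k t).val.1]
  -- injectivity of Ψ
  have hnoloop : ∀ x : Vo, ¬ 0 < wo x x := by
    intro x h
    rcases hEp_orient x x h with ⟨h1, h2⟩ | ⟨h1, h2⟩ <;> exact h2 h1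
  have hΨinj : Function.Injective Ψ := by
    intro t1 t2 heq
    rw [hΨapp t1, hΨapp t2, Prod.mk.injEq] at heq
    obtain ⟨hv, hi⟩ := heq
    apply hk
    apply Subtype.ext
    obtain ⟨hEp1, hw1, -, -⟩ := (k t1).prop
    obtain ⟨hEp2, hw2, -, -⟩ := (k t2).prop
    by_cases c1 : u0 = (k t1).val.1 <;> by_cases c2 : u0 = (k t2).val.1
    · rw [if_pos c1, if_pos c2] at hv
      refine Prod.ext_iff.mpr ⟨?_, Prod.ext_iff.mpr ⟨hv, hi⟩⟩
      rw [← c1, ← c2]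
    · rw [if_pos c1, if_neg c2] at hv
      have hu2 : u0 = (k t2).val.2.1 := (hend t2).resolve_left c2
      exfalso
      rw [← c1] at hEp1 hw1
      rw [← hu2] at hEp2
      rw [← hv] at hEp2
      rcases hEp_orient u0 (k t1).val.2.1 hw1 with ⟨-, h2⟩ | ⟨-, h2⟩
      · exact h2 hEp2
      · exact h2 hEp1
    · rw [if_neg c1, if_pos c2] at hv
      have hu1 : u0 = (k t1).val.2.1 := (hend t1).resolve_left c1
      exfalso
      rw [← c2] at hEp2 hw2
      rw [← hu1] at hEp1
      rw [hv] at hEp1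
      rcases hEp_orient u0 (k t2).val.2.1 hw2 with ⟨-, h2⟩ | ⟨-, h2⟩
      · exact h2 hEp1
      · exact h2 hEp2
    · rw [if_neg c1, if_neg c2] at hv
      have hu1 : u0 = (k t1).val.2.1 := (hend t1).resolve_left c1
      have hu2 : u0 = (k t2).val.2.1 := (hend t2).resolve_left c2
      refine Prod.ext_iff.mpr ⟨hv, Prod.ext_iff.mpr ⟨?_, hi⟩⟩
      rw [← hu1, ← hu2]
  -- inner sum over ℕ
  have inner : ∀ v : Vo, (∑' i : ℕ, φ (v, i))
      ≤ ENNReal.ofReal (2 * wo u0 v * σo u0 v ^ 2) := by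
    intro v
    simp only [hφapp]
    by_cases hv : 0 < wo u0 v
    · have hn2' : 2 ≤ n u0 v := hn2 u0 v hv
      have hNpos : (0:ℝ) < (n u0 v : ℝ) := by exact_mod_cast (by omega : 0 < n u0 v)
      have hstep : (∑' i : ℕ, φ (v, i))
          = ∑ i ∈ Finset.Icc 1 (n u0 v - 1), φ (v, i) :=
        tsum_eq_sum (fun i hi => if_neg (fun hcon =>
          hi (Finset.mem_Icc.mpr ⟨hcon.2.1, hcon.2.2⟩)))
      rw [hstep]
      have hconst : ∀ i ∈ Finset.Icc 1 (n u0 v - 1),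
          φ (v, i) = ENNReal.ofReal (2 * wo u0 v * σo u0 v ^ 2 / (n u0 v : ℝ)) := by
        intro i hi
        exact if_pos ⟨hv, (Finset.mem_Icc.mp hi).1, (Finset.mem_Icc.mp hi).2⟩
      rw [Finset.sum_congr rfl hconst, Finset.sum_const, Nat.card_Icc]
      rw [show n u0 v - 1 + 1 - 1 = n u0 v - 1 from by omega]
      rw [nsmul_eq_mul, ← ENNReal.ofReal_natCast (n u0 v - 1),
        ← ENNReal.ofReal_mul (Nat.cast_nonneg _)]
      apply ENNReal.ofReal_le_ofReal
      have hX : (0:ℝ) ≤ 2 * wo u0 v * σo u0 v ^ 2 :=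
        mul_nonneg (mul_nonneg (by norm_num) hv.le) (sq_nonneg _)
      have hcast : ((n u0 v - 1 : ℕ) : ℝ) = (n u0 v : ℝ) - 1 := by
        rw [Nat.cast_sub (by omega)]; norm_num
      rw [hcast]
      have hdivnn : (0:ℝ) ≤ 2 * wo u0 v * σo u0 v ^ 2 / (n u0 v : ℝ) :=
        div_nonneg hX hNpos.le
      have hiden : ((n u0 v : ℝ) - 1) * (2 * wo u0 v * σo u0 v ^ 2 / (n u0 v : ℝ))
          = 2 * wo u0 v * σo u0 v ^ 2 - 2 * wo u0 v * σo u0 v ^ 2 / (n u0 v : ℝ) := by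
        field_simp
      rw [hiden]
      linarith
    · have hz : ∀ i : ℕ, φ (v, i) = 0 := fun i => if_neg (fun hcon => hv hcon.1)
      rw [tsum_congr hz, tsum_zero]
      exact zero_le
  -- summability of the real comparison family
  have hnn : ∀ v : Vo, (0:ℝ) ≤ 2 * wo u0 v * σo u0 v ^ 2 := fun v =>
    mul_nonneg (mul_nonneg (by norm_num) (hwo_nonneg _ _)) (sq_nonneg _)
  have hsummable : Summable (fun v : Vo => 2 * wo u0 v * σo u0 v ^ 2) := by
    apply summable_of_ne_finset_zero (s := (hloc u0).toFinset)
    intro v hv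
    have hw0 : wo u0 v = 0 := le_antisymm
      (not_lt.mp (fun hcon => hv ((hloc u0).mem_toFinset.mpr hcon))) (hwo_nonneg u0 v)
    simp [hw0]
  calc ∑' t : ι, ENNReal.ofReal (mμ wo σo μo n Ep (Sum.inr (k t)))
      = ∑' t : ι, φ (Ψ t) := tsum_congr hpt
    _ ≤ ∑' vi : Vo × ℕ, φ vi := ENNReal.tsum_comp_le_tsum_of_injective hΨinj φ
    _ = ∑' v : Vo, ∑' i : ℕ, φ (v, i) := ENNReal.tsum_prod'
    _ ≤ ∑' v : Vo, ENNReal.ofReal (2 * wo u0 v * σo u0 v ^ 2) := ENNReal.tsum_le_tsum inner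
    _ = ENNReal.ofReal (∑' v : Vo, 2 * wo u0 v * σo u0 v ^ 2) :=
        (ENNReal.ofReal_tsum_of_nonneg hnn hsummable).symm
    _ ≤ ENNReal.ofReal (2 * μo u0) := by
        apply ENNReal.ofReal_le_ofReal
        have : (∑' v : Vo, 2 * (wo u0 v * σo u0 v ^ 2)) = 2 * ∑' v, wo u0 v * σo u0 v ^ 2 :=
          tsum_mul_left
        rw [show (fun v : Vo => 2 * wo u0 v * σo u0 v ^ 2)
          = fun v : Vo => 2 * (wo u0 v * σo u0 v ^ 2) from by funext v; ring] at *
        rw [this]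
        have := hadapt u0
        linarith

end Fiber

section Split

universe v

lemma split_helper {α β : Type v} (S : Set (α ⊕ β)) (f : α ⊕ β → ENNReal) :
    ∑' x : S, f x.val = (∑' a : {a : α | Sum.inl a ∈ S}, f (Sum.inl a.val))
      + ∑' b : {b : β | Sum.inr b ∈ S}, f (Sum.inr b.val) := by
  rw [tsum_subtype S f, tsum_sum_type,
    tsum_subtype {a : α | Sum.inl a ∈ S} (fun a => f (Sum.inl a)),
    tsum_subtype {b : β | Sum.inr b ∈ S} (fun b => f (Sum.inr b))]
  have h1 : ∀ a : α, S.indicator f (Sum.inl a)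
      = Set.indicator {a | Sum.inl a ∈ S} (fun a => f (Sum.inl a)) a := fun a => by
    by_cases h : Sum.inl a ∈ S <;> simp [Set.indicator, h]
  have h2 : ∀ b : β, S.indicator f (Sum.inr b)
      = Set.indicator {b | Sum.inr b ∈ S} (fun b => f (Sum.inr b)) b := fun b => by
    by_cases h : Sum.inr b ∈ S <;> simp [Set.indicator, h]
  rw [tsum_congr h1, tsum_congr h2]

end Split


/-- Comparison of ball volumes between a weighted graph and its modification:
`μ_o(B_{d_{σ_o}}(x₀, r)) ≤ μ(B_{d_σ}(x₀, r)) ≤ 3·μ_o(B_{d_{σ_o}}(x₀, r))`,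
where balls are closed balls in the respective adapted path metrics. -/
theorem stmt_8 {Vo : Type*} (wo σo : Vo → Vo → ℝ) (μo : Vo → ℝ)
    (n : Vo → Vo → ℕ) (Ep : Set (Vo × Vo))
    (hwo_symm : ∀ x y, wo x y = wo y x) (hwo_nonneg : ∀ x y, 0 ≤ wo x y)
    (hμo_pos : ∀ x, 0 < μo x)
    (hloc : ∀ x, {y | 0 < wo x y}.Finite)
    (hσo_symm : ∀ x y, σo x y = σo y x)
    (hσo_edge : ∀ x y, 0 < wo x y → 0 < σo x y ∧ σo x y ≤ 1)
    (hadapt : ∀ x, ∑' y, wo x y * σo x y ^ 2 ≤ μo x)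
    (hn_symm : ∀ x y, n x y = n y x) (hn2 : ∀ x y, 0 < wo x y → 2 ≤ n x y)
    (hEp_edge : ∀ p ∈ Ep, 0 < wo p.1 p.2)
    (hEp_orient : ∀ x y, 0 < wo x y → Xor' ((x, y) ∈ Ep) ((y, x) ∈ Ep))
    (hconn : ∀ x y : Vo, ∃ l : List Vo, isPath wo x y l) :
    ∀ x₀ : Vo, ∀ r : ℝ, 0 < r →
      (∑' y : {y : Vo // dPath wo σo x₀ y ≤ r}, μo y.val) ≤
        (∑' p : {p : MV wo n Ep // dPath (mw wo n Ep) (mσ wo σo n Ep) (Sum.inl x₀) p ≤ r},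
          mμ wo σo μo n Ep p.val) ∧
      (∑' p : {p : MV wo n Ep // dPath (mw wo n Ep) (mσ wo σo n Ep) (Sum.inl x₀) p ≤ r},
          mμ wo σo μo n Ep p.val) ≤
        3 * ∑' y : {y : Vo // dPath wo σo x₀ y ≤ r}, μo y.val := by
  intro x₀ r hr
  have hσo_pos : ∀ x y, 0 < wo x y → 0 < σo x y := fun x y h => (hσo_edge x y h).1
  have hdeq : ∀ y : Vo,
      dPath (mw wo n Ep) (mσ wo σo n Ep) (Sum.inl x₀) (Sum.inl y) = dPath wo σo x₀ y :=
    fun y => dPath_eq_mod wo σo n Ep hwo_symm hσo_symm hσo_pos hn2 hEp_orient hconn x₀ y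
  -- ENNReal versions of the two ball masses
  set Ae : ENNReal :=
    ∑' y : {y : Vo // dPath wo σo x₀ y ≤ r}, ENNReal.ofReal (μo y.val) with hAe
  set Ce : ENNReal :=
    ∑' p : {p : MV wo n Ep // dPath (mw wo n Ep) (mσ wo σo n Ep) (Sum.inl x₀) p ≤ r},
      ENNReal.ofReal (mμ wo σo μo n Ep p.val) with hCe
  -- split of Ce
  have hsplit := split_helper
    {p : MV wo n Ep | dPath (mw wo n Ep) (mσ wo σo n Ep) (Sum.inl x₀) p ≤ r}
    (fun p => ENNReal.ofReal (mμ wo σo μo n Ep p))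
  -- the inl part equals Ae
  have hinl : (∑' a : {a : Vo | Sum.inl a ∈
        {p : MV wo n Ep | dPath (mw wo n Ep) (mσ wo σo n Ep) (Sum.inl x₀) p ≤ r}},
      ENNReal.ofReal (mμ wo σo μo n Ep (Sum.inl a.val))) = Ae := by
    rw [hAe]
    exact Equiv.tsum_eq (Equiv.subtypeEquivRight (fun y => by
        show dPath (mw wo n Ep) (mσ wo σo n Ep) (Sum.inl x₀) (Sum.inl y) ≤ r
          ↔ dPath wo σo x₀ y ≤ r
        rw [hdeq y]))
      (fun y : {y : Vo // dPath wo σo x₀ y ≤ r} => ENNReal.ofReal (μo y.val))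
  -- bound on the inr part
  set T := {b : NewV wo n Ep | Sum.inr b ∈
    {p : MV wo n Ep | dPath (mw wo n Ep) (mσ wo σo n Ep) (Sum.inl x₀) p ≤ r}} with hT
  set g : T → {y : Vo // dPath wo σo x₀ y ≤ r} := fun q =>
    if h1 : dPath wo σo x₀ q.val.val.1 ≤ r then ⟨q.val.val.1, h1⟩
    else ⟨q.val.val.2.1, by
      have hmin := min_endpoint wo σo n Ep hwo_symm hσo_symm hσo_pos hn2 hEp_orient hconn
        x₀ q.val
      rcases min_le_iff.mp (hmin.trans q.prop) with h | h
      · exact absurd h h1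
      · exact h⟩ with hg
  have hgend : ∀ t : T, (g t).val = t.val.val.1 ∨ (g t).val = t.val.val.2.1 := by
    intro t
    by_cases h1 : dPath wo σo x₀ t.val.val.1 ≤ r
    · left; rw [hg]; simp only [dif_pos h1]
    · right; rw [hg]; simp only [dif_neg h1]
  have hTbound : (∑' q : T, ENNReal.ofReal (mμ wo σo μo n Ep (Sum.inr q.val)))
      ≤ 2 * Ae := by
    calc ∑' q : T, ENNReal.ofReal (mμ wo σo μo n Ep (Sum.inr q.val))
        = ∑' p : (Σ u : {y : Vo // dPath wo σo x₀ y ≤ r}, ↥(g ⁻¹' {u})),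
            ENNReal.ofReal (mμ wo σo μo n Ep (Sum.inr p.2.val.val)) :=
          (Equiv.tsum_eq (Equiv.sigmaFiberEquiv g)
            (fun q : T => ENNReal.ofReal (mμ wo σo μo n Ep (Sum.inr q.val)))).symm
      _ = ∑' u : {y : Vo // dPath wo σo x₀ y ≤ r}, ∑' q : ↥(g ⁻¹' {u}),
            ENNReal.ofReal (mμ wo σo μo n Ep (Sum.inr q.val.val)) :=
          ENNReal.tsum_sigma' _
      _ ≤ ∑' u : {y : Vo // dPath wo σo x₀ y ≤ r}, ENNReal.ofReal (2 * μo u.val) := by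
          apply ENNReal.tsum_le_tsum
          intro u
          apply fiber_bound wo σo μo n Ep hwo_symm hwo_nonneg hσo_symm hn_symm hn2 hloc
            hadapt hEp_orient u.val (fun q : ↥(g ⁻¹' {u}) => q.val.val)
            (Subtype.val_injective.comp Subtype.val_injective)
          intro q
          have hq : g q.val = u := q.prop
          rcases hgend q.val with h | h
          · exact Or.inl ((congrArg Subtype.val hq).symm.trans h)
          · exact Or.inr ((congrArg Subtype.val hq).symm.trans h)
      _ = ∑' u : {y : Vo // dPath wo σo x₀ y ≤ r}, 2 * ENNReal.ofReal (μo u.val) := by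
          apply tsum_congr
          intro u
          rw [ENNReal.ofReal_mul (by norm_num : (0:ℝ) ≤ 2)]
          norm_num
      _ = 2 * Ae := by rw [hAe]; exact ENNReal.tsum_mul_left
  -- combine
  have hCeq : Ce = Ae +
      (∑' q : T, ENNReal.ofReal (mμ wo σo μo n Ep (Sum.inr q.val))) := by
    rw [hCe]
    rw [show (∑' p : {p : MV wo n Ep //
          dPath (mw wo n Ep) (mσ wo σo n Ep) (Sum.inl x₀) p ≤ r},
        ENNReal.ofReal (mμ wo σo μo n Ep p.val)) = _ from hsplit, hinl]
  have hAC : Ae ≤ Ce := by rw [hCeq]; exact le_self_add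
  have hC3 : Ce ≤ 3 * Ae := by
    rw [hCeq]
    calc Ae + (∑' q : T, ENNReal.ofReal (mμ wo σo μo n Ep (Sum.inr q.val)))
        ≤ Ae + 2 * Ae := add_le_add_right hTbound _
      _ = 3 * Ae := by ring
  -- realification
  have hSA : (∑' y : {y : Vo // dPath wo σo x₀ y ≤ r}, μo y.val) = Ae.toReal := by
    rw [hAe, ENNReal.tsum_toReal_eq (fun _ => ENNReal.ofReal_ne_top)]
    exact tsum_congr fun y => (ENNReal.toReal_ofReal (hμo_pos _).le).symm
  have hSC : (∑' p : {p : MV wo n Ep //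
        dPath (mw wo n Ep) (mσ wo σo n Ep) (Sum.inl x₀) p ≤ r},
      mμ wo σo μo n Ep p.val) = Ce.toReal := by
    rw [hCe, ENNReal.tsum_toReal_eq (fun _ => ENNReal.ofReal_ne_top)]
    exact tsum_congr fun p =>
      (ENNReal.toReal_ofReal (mμ_nonneg wo σo μo n Ep hwo_nonneg hμo_pos p.val)).symm
  by_cases htop : Ce = ⊤
  · have hAtop : Ae = ⊤ := by
      by_contra hA
      have h3 : (3 : ENNReal) * Ae ≠ ⊤ := ENNReal.mul_ne_top (by simp) hA
      exact h3 (top_le_iff.mp (htop ▸ hC3))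
    rw [hSA, hSC, hAtop, htop]
    norm_num
  · have hA : Ae ≠ ⊤ := fun h => htop (top_le_iff.mp (h ▸ hAC))
    constructor
    · rw [hSA, hSC]
      exact (ENNReal.toReal_le_toReal hA htop).mpr hAC
    · rw [hSA, hSC]
      calc Ce.toReal ≤ ((3 : ENNReal) * Ae).toReal :=
            (ENNReal.toReal_le_toReal htop (ENNReal.mul_ne_top (by simp) hA)).mpr hC3
        _ = 3 * Ae.toReal := by rw [ENNReal.toReal_mul]; norm_num
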